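/- arXiv:0901.1745 — 2 statements merged into one kernel-verified Lean document; each statement's English description precedes it below -/
import Mathlib

section
/- Let T be a tree (connected acyclic simple graph) and let φ : T → T be a locally injective graph homomorphism. Then φ is injective. -/
open SimpleGraph Walk

private lemma path_getVert_ne {V : Type*} {G : SimpleGraph V} {u v : V} {p : G.Walk u v}
    (hp : p.IsPath) : ∀ {i j : ℕ}, i < j → j ≤ p.length → p.getVert i ≠ p.getVert j := by
  induction p with
  | nil => intro i j hij hj; simp at hj; omega
  | cons h q ih =>
    intro i j hij hj
    rw [Walk.cons_isPath_iff] at hp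
    match i, j with
    | 0, (j+1) =>
      simp only [Walk.getVert_zero, Walk.getVert_cons_succ]
      intro he
      exact hp.2 (Walk.mem_support_iff_exists_getVert.2 ⟨j, he.symm, by
        simpa using Nat.le_of_succ_le_succ hj⟩)
    | (i+1), (j+1) =>
      simp only [Walk.getVert_cons_succ]
      exact ih hp.1 (by omega) (by simpa using Nat.le_of_succ_le_succ hj)

private lemma getVert_map' {V : Type*} {G G' : SimpleGraph V} {u v : V} (φ : G →g G')
    (p : G.Walk u v) : ∀ i, (p.map φ).getVert i = φ (p.getVert i) := by
  induction p with
  | nil => intro i; simp [Walk.getVert_of_length_le]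
  | cons h q ih =>
    intro i
    match i with
    | 0 => simp
    | (i+1) => simpa only [Walk.map_cons, Walk.getVert_cons_succ] using ih i

private lemma tree_cons_isPath {V : Type*} {T : SimpleGraph V} (hT : T.IsTree) {u v x : V}
    (h : T.Adj u v) (p : T.Walk v x) (hp : p.IsPath) (h1 : p.getVert 1 ≠ u) :
    (Walk.cons h p).IsPath := by
  classical
  rw [Walk.cons_isPath_iff]
  refine ⟨hp, fun hu => ?_⟩
  have hq : (p.takeUntil u hu).IsPath := hp.takeUntil hu
  have hr : (Walk.cons h.symm Walk.nil : T.Walk v u).IsPath := by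
    rw [Walk.cons_isPath_iff]
    exact ⟨Walk.IsPath.nil, by simp [h.ne']⟩
  have heq : p.takeUntil u hu = Walk.cons h.symm Walk.nil :=
    (hT.existsUnique_path v u).unique hq hr
  have hlen : (p.takeUntil u hu).length = 1 := by rw [heq]; simp
  have hspec := p.take_spec hu
  apply h1
  calc p.getVert 1 = ((p.takeUntil u hu).append (p.dropUntil u hu)).getVert 1 := by
        rw [hspec]
    _ = u := by
        rw [Walk.getVert_append, hlen]
        simp

private lemma tree_nonbacktracking_isPath {V : Type*} {T : SimpleGraph V} (hT : T.IsTree)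
    {u x : V} (w : T.Walk u x)
    (hw : ∀ i, i + 2 ≤ w.length → w.getVert i ≠ w.getVert (i + 2)) : w.IsPath := by
  induction w with
  | nil => exact Walk.IsPath.nil
  | @cons a b c hadj q ih =>
    have hq : q.IsPath := ih (fun i hi => by
      have := hw (i + 1) (by simpa using Nat.succ_le_succ hi)
      simpa only [Walk.getVert_cons_succ] using this)
    apply tree_cons_isPath hT hadj q hq
    rcases Nat.lt_or_ge q.length 1 with hl | hl
    · have hbc : b = c := Walk.eq_of_length_eq_zero (p := q) (by omega)
      have : q.getVert 1 = c := Walk.getVert_of_length_le q (by omega)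
      rw [this, ← hbc]
      exact hadj.ne'
    · have := hw 0 (by simp; omega)
      simp only [Walk.getVert_zero, Walk.getVert_cons_succ] at this
      exact fun he => this (by rw [he])

/-- A locally injective graph homomorphism from a tree to itself is injective. -/
theorem tree_locally_injective_hom_injective {V : Type*} (T : SimpleGraph V) (hT : T.IsTree)
    (φ : T →g T)
    (hloc : ∀ v u w : V, (u = v ∨ T.Adj v u) → (w = v ∨ T.Adj v w) → u ≠ w → φ u ≠ φ w) :
    Function.Injective φ := by
  intro a b hab
  by_contra hne
  obtain ⟨p, hp, -⟩ := hT.existsUnique_path a b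
  set m : T.Walk (φ a) (φ b) := p.map φ with hm
  have hmlen : m.length = p.length := Walk.length_map _ _
  have hnb : ∀ i, i + 2 ≤ m.length → m.getVert i ≠ m.getVert (i + 2) := by
    intro i hi
    rw [hmlen] at hi
    rw [hm, getVert_map', getVert_map']
    apply hloc (p.getVert (i + 1))
    · exact Or.inr (p.adj_getVert_succ (by omega)).symm
    · exact Or.inr (by simpa using p.adj_getVert_succ (i := i + 1) (by omega))
    · exact path_getVert_ne hp (by omega) hi
  have hmp : m.IsPath := tree_nonbacktracking_isPath hT m hnb
  have hmp' : (m.copy rfl hab.symm).IsPath := by rwa [Walk.isPath_copy]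
  have hnil : m.copy rfl hab.symm = Walk.nil := Walk.isPath_iff_eq_nil.1 hmp'
  have hml0 : m.length = 0 := by
    have := congrArg Walk.length hnil
    simpa using this
  rw [hmlen] at hml0
  exact hne (Walk.eq_of_length_eq_zero hml0)
end

section
/- In the standard Farey graph, any two vertices can be connected by a sequence of 3-cycles such that consecutive 3-cycles share exactly two vertices (an edge). -/
abbrev FareyVertex : Type :=
  {v : ℤ × ℤ // Int.gcd v.1 v.2 = 1 ∧ (0 < v.2 ∨ (v.2 = 0 ∧ v.1 = 1))}

def FareyGraph : SimpleGraph FareyVertex where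
  Adj u v := |u.1.1 * v.1.2 - v.1.1 * u.1.2| = 1
  symm := by
    constructor
    intro u v h
    beta_reduce at h ⊢
    rw [show v.1.1 * u.1.2 - u.1.1 * v.1.2 = -(u.1.1 * v.1.2 - v.1.1 * u.1.2) by ring,
      abs_neg]
    exact h
  loopless := by
    constructor
    intro u h
    simp at h

def IsFareyTriangle (T : Finset FareyVertex) : Prop :=
  T.card = 3 ∧ ∀ u ∈ T, ∀ v ∈ T, u ≠ v → FareyGraph.Adj u v

namespace FareyAux

def linkR (A B : Finset FareyVertex) : Prop := (A ∩ B).card = 2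

lemma adj_iff (u v : FareyVertex) :
    FareyGraph.Adj u v ↔ |u.1.1 * v.1.2 - v.1.1 * u.1.2| = 1 := Iff.rfl

def inf : FareyVertex := ⟨(1, 0), by norm_num [Int.gcd], Or.inr ⟨rfl, rfl⟩⟩

def intV (n : ℤ) : FareyVertex := ⟨(n, 1), by simp [Int.gcd], Or.inl one_pos⟩

lemma inf_ne_intV (n : ℤ) : inf ≠ intV n := by
  simp [inf, intV, Subtype.ext_iff, Prod.ext_iff]

lemma intV_inj {a b : ℤ} : intV a = intV b ↔ a = b := by
  simp [intV, Subtype.ext_iff, Prod.ext_iff]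

lemma adj_inf_intV (n : ℤ) : FareyGraph.Adj inf (intV n) := by
  simp [adj_iff, inf, intV]

lemma adj_intV_succ (n : ℤ) : FareyGraph.Adj (intV n) (intV (n + 1)) := by
  simp [adj_iff, intV]

lemma tri_of_adj (a b c : FareyVertex) (hab : FareyGraph.Adj a b)
    (hac : FareyGraph.Adj a c) (hbc : FareyGraph.Adj b c) :
    IsFareyTriangle {a, b, c} := by
  have nab := hab.ne
  have nac := hac.ne
  have nbc := hbc.ne
  constructor
  · rw [Finset.card_insert_of_notMem (by simp [nab, nac]), Finset.card_pair nbc]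
  · intro u hu v hv huv
    simp only [Finset.mem_insert, Finset.mem_singleton] at hu hv
    rcases hu with rfl | rfl | rfl <;> rcases hv with rfl | rfl | rfl <;>
      first
        | exact absurd rfl huv
        | exact hab | exact hac | exact hbc
        | exact hab.symm | exact hac.symm | exact hbc.symm

def triInf (n : ℤ) : Finset FareyVertex := {inf, intV n, intV (n + 1)}

lemma triInf_isTriangle (n : ℤ) : IsFareyTriangle (triInf n) :=
  tri_of_adj _ _ _ (adj_inf_intV n) (adj_inf_intV (n + 1)) (adj_intV_succ n)

lemma triInf_inter (j : ℤ) : linkR (triInf j) (triInf (j + 1)) := by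
  have h : triInf j ∩ triInf (j + 1) = {inf, intV (j + 1)} := by
    ext v
    simp only [triInf, Finset.mem_inter, Finset.mem_insert, Finset.mem_singleton]
    constructor
    · rintro ⟨h1 | h1 | h1, h2 | h2 | h2⟩ <;> subst h1 <;>
        first
          | exact Or.inl rfl
          | exact Or.inr rfl
          | exact absurd h2.symm (inf_ne_intV _)
          | exact absurd h2 (inf_ne_intV _)
          | (exfalso; have := intV_inj.mp h2; omega)
    · rintro (rfl | rfl) <;> simp
  rw [linkR, h, Finset.card_insert_of_notMem (by simp [inf_ne_intV]),
    Finset.card_singleton]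


lemma edgeChainAux : ∀ k : ℕ, ∀ a c : FareyVertex,
    a.1.2.natAbs + c.1.2.natAbs ≤ k → FareyGraph.Adj a c →
    ∃ (T : Finset FareyVertex) (L : List (Finset FareyVertex)),
      (∀ S ∈ T :: L, IsFareyTriangle S) ∧ List.Chain' linkR (T :: L) ∧
      a ∈ T ∧ c ∈ T ∧
      (∀ S ∈ T :: L, ∀ v ∈ S, v.1.2 ≤ max a.1.2 c.1.2) ∧
      ∃ n : ℤ, (T :: L).getLast? = some (triInf n) := by
  intro k
  induction k with
  | zero =>
    intro a c hk h
    exfalso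
    have ha2 : a.1.2 = 0 := by omega
    have hc2 : c.1.2 = 0 := by omega
    have hz : a.1.1 * c.1.2 - c.1.1 * a.1.2 = 0 := by rw [ha2, hc2]; ring
    rw [adj_iff, hz] at h
    simp at h
  | succ k ih =>
    intro a c hk h
    have hnum : |a.1.1 * c.1.2 - c.1.1 * a.1.2| = 1 := h
    have ha0 : 0 ≤ a.1.2 := by rcases a.2.2 with h' | ⟨h', _⟩ <;> omega
    have hc0 : 0 ≤ c.1.2 := by rcases c.2.2 with h' | ⟨h', _⟩ <;> omega
    by_cases haz : a.1.2 = 0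
    · -- a = inf
      have ha1 : a.1.1 = 1 := ((a.2.2.resolve_left (by omega))).2
      have hA : a = inf := Subtype.ext (Prod.ext_iff.mpr ⟨ha1, haz⟩)
      have hc2 : c.1.2 = 1 := by
        have h' : |c.1.2| = 1 := by
          rw [show c.1.2 = a.1.1 * c.1.2 - c.1.1 * a.1.2 by rw [ha1, haz]; ring]
          exact hnum
        rcases abs_cases c.1.2 with ⟨he, h0⟩ | ⟨he, h0⟩ <;> omega
      have hC : c = intV c.1.1 := Subtype.ext (Prod.ext_iff.mpr ⟨rfl, hc2⟩)
      refine ⟨triInf c.1.1, [], ?_, List.isChain_singleton _, ?_, ?_, ?_, c.1.1, rfl⟩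
      · intro S hS; rw [List.mem_singleton] at hS; rw [hS]; exact triInf_isTriangle _
      · simp only [triInf, Finset.mem_insert, Finset.mem_singleton]
        exact Or.inl hA
      · simp only [triInf, Finset.mem_insert, Finset.mem_singleton]
        exact Or.inr (Or.inl hC)
      · intro S hS v hv
        rw [List.mem_singleton] at hS
        subst hS
        rw [haz, hc2]
        simp only [triInf, Finset.mem_insert, Finset.mem_singleton] at hv
        rcases hv with rfl | rfl | rfl <;> simp [inf, intV]
    · by_cases hcz : c.1.2 = 0
      · have hc1 : c.1.1 = 1 := ((c.2.2.resolve_left (by omega))).2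
        have hC : c = inf := Subtype.ext (Prod.ext_iff.mpr ⟨hc1, hcz⟩)
        have ha2 : a.1.2 = 1 := by
          have h' : |a.1.2| = 1 := by
            rw [show a.1.2 = -(a.1.1 * c.1.2 - c.1.1 * a.1.2) by rw [hc1, hcz]; ring,
              abs_neg]
            exact hnum
          rcases abs_cases a.1.2 with ⟨he, h0⟩ | ⟨he, h0⟩ <;> omega
        have hA : a = intV a.1.1 := Subtype.ext (Prod.ext_iff.mpr ⟨rfl, ha2⟩)
        refine ⟨triInf a.1.1, [], ?_, List.isChain_singleton _, ?_, ?_, ?_, a.1.1, rfl⟩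
        · intro S hS; rw [List.mem_singleton] at hS; rw [hS]; exact triInf_isTriangle _
        · simp only [triInf, Finset.mem_insert, Finset.mem_singleton]
          exact Or.inr (Or.inl hA)
        · simp only [triInf, Finset.mem_insert, Finset.mem_singleton]
          exact Or.inl hC
        · intro S hS v hv
          rw [List.mem_singleton] at hS
          subst hS
          rw [ha2, hcz]
          simp only [triInf, Finset.mem_insert, Finset.mem_singleton] at hv
          rcases hv with rfl | rfl | rfl <;> simp [inf, intV]
      · -- both denominators positive
        have hap : 0 < a.1.2 := by omega
        have hcp : 0 < c.1.2 := by omega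
        rcases lt_trichotomy a.1.2 c.1.2 with hlt | heq | hgt
        · -- c has larger denominator: d = c - a
          have hd2 : 0 < c.1.2 - a.1.2 := by omega
          have hcop : Int.gcd (c.1.1 - a.1.1) (c.1.2 - a.1.2) = 1 := by
            rw [← Int.isCoprime_iff_gcd_eq_one]
            rcases (abs_eq (by norm_num : (0:ℤ) ≤ 1)).mp hnum with h' | h'
            · exact ⟨-a.1.2, a.1.1, by linear_combination h'⟩
            · exact ⟨a.1.2, -a.1.1, by linear_combination -h'⟩
          set d : FareyVertex := ⟨(c.1.1 - a.1.1, c.1.2 - a.1.2), hcop, Or.inl hd2⟩ with hdd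
          have had : FareyGraph.Adj a d := by
            rw [adj_iff]
            show |a.1.1 * (c.1.2 - a.1.2) - (c.1.1 - a.1.1) * a.1.2| = 1
            rw [show a.1.1 * (c.1.2 - a.1.2) - (c.1.1 - a.1.1) * a.1.2
              = a.1.1 * c.1.2 - c.1.1 * a.1.2 by ring]
            exact hnum
          have hcd : FareyGraph.Adj c d := by
            rw [adj_iff]
            show |c.1.1 * (c.1.2 - a.1.2) - (c.1.1 - a.1.1) * c.1.2| = 1
            rw [show c.1.1 * (c.1.2 - a.1.2) - (c.1.1 - a.1.1) * c.1.2
              = a.1.1 * c.1.2 - c.1.1 * a.1.2 by ring]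
            exact hnum
          obtain ⟨T', L', htri', hch', haT', hdT', hbd', n, hlast'⟩ :=
            ih a d (by show a.1.2.natAbs + (c.1.2 - a.1.2).natAbs ≤ k; omega) had
          have hd2' : d.1.2 = c.1.2 - a.1.2 := rfl
          have hcnT' : c ∉ T' := by
            intro hmem
            have hb := hbd' T' List.mem_cons_self c hmem
            rcases le_max_iff.mp hb with h' | h' <;> rw [hd2'] at * <;> omega
          have hnead : a ≠ d := had.ne
          have hint : ({a, c, d} : Finset FareyVertex) ∩ T' = {a, d} := by
            ext v
            simp only [Finset.mem_inter, Finset.mem_insert, Finset.mem_singleton]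
            constructor
            · rintro ⟨rfl | rfl | rfl, hv⟩
              · exact Or.inl rfl
              · exact absurd hv hcnT'
              · exact Or.inr rfl
            · rintro (rfl | rfl)
              · exact ⟨Or.inl rfl, haT'⟩
              · exact ⟨Or.inr (Or.inr rfl), hdT'⟩
          refine ⟨{a, c, d}, T' :: L', ?_, ?_, by simp, by simp, ?_, n, ?_⟩
          · intro S hS
            rcases List.mem_cons.mp hS with rfl | hS
            · exact tri_of_adj a c d h had hcd
            · exact htri' S hS
          · refine List.isChain_cons_cons.mpr ⟨?_, hch'⟩
            rw [linkR, hint, Finset.card_pair hnead]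
          · intro S hS v hv
            rcases List.mem_cons.mp hS with rfl | hS
            · simp only [Finset.mem_insert, Finset.mem_singleton] at hv
              rcases hv with rfl | rfl | rfl
              · exact le_max_left _ _
              · exact le_max_right _ _
              · rw [hd2']; exact le_max_iff.mpr (Or.inr (by omega))
            · have hb := hbd' S hS v hv
              rw [hd2'] at hb
              rcases le_max_iff.mp hb with h' | h'
              · exact le_max_iff.mpr (Or.inl h')
              · exact le_max_iff.mpr (Or.inr (by omega))
          · rw [List.getLast?_cons_cons]
            exact hlast'
        · -- equal denominators: both are 1
          have h1 : a.1.2 * (a.1.1 - c.1.1) = 1 ∨ a.1.2 * (a.1.1 - c.1.1) = -1 := by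
            rcases (abs_eq (by norm_num : (0:ℤ) ≤ 1)).mp hnum with h' | h'
            · left; linear_combination h' + a.1.1 * heq
            · right; linear_combination h' + a.1.1 * heq
          have hq1 : a.1.2 = 1 := by
            rcases h1 with h' | h'
            · exact Int.eq_one_of_mul_eq_one_right ha0 h'
            · exact Int.eq_one_of_mul_eq_one_right ha0
                (show a.1.2 * (c.1.1 - a.1.1) = 1 by linear_combination -h')
          have hq1' : c.1.2 = 1 := by omega
          have hd : a.1.1 - c.1.1 = 1 ∨ a.1.1 - c.1.1 = -1 := by
            rcases h1 with h' | h' <;> rw [hq1] at h' <;> [left; right] <;> linarith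
          have hA : a = intV a.1.1 := Subtype.ext (Prod.ext_iff.mpr ⟨rfl, hq1⟩)
          have hC : c = intV c.1.1 := Subtype.ext (Prod.ext_iff.mpr ⟨rfl, hq1'⟩)
          rcases hd with hd | hd
          · -- a = c + 1 : use triInf c.1.1
            refine ⟨triInf c.1.1, [], ?_, List.isChain_singleton _, ?_, ?_, ?_, c.1.1, rfl⟩
            · intro S hS; rw [List.mem_singleton] at hS; rw [hS]; exact triInf_isTriangle _
            · simp only [triInf, Finset.mem_insert, Finset.mem_singleton]
              refine Or.inr (Or.inr ?_)
              rw [hA, intV_inj]; omega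
            · simp only [triInf, Finset.mem_insert, Finset.mem_singleton]
              exact Or.inr (Or.inl hC)
            · intro S hS v hv
              rw [List.mem_singleton] at hS
              subst hS
              rw [hq1, hq1']
              simp only [triInf, Finset.mem_insert, Finset.mem_singleton] at hv
              rcases hv with rfl | rfl | rfl <;> simp [inf, intV]
          · refine ⟨triInf a.1.1, [], ?_, List.isChain_singleton _, ?_, ?_, ?_, a.1.1, rfl⟩
            · intro S hS; rw [List.mem_singleton] at hS; rw [hS]; exact triInf_isTriangle _
            · simp only [triInf, Finset.mem_insert, Finset.mem_singleton]
              exact Or.inr (Or.inl hA)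
            · simp only [triInf, Finset.mem_insert, Finset.mem_singleton]
              refine Or.inr (Or.inr ?_)
              rw [hC, intV_inj]; omega
            · intro S hS v hv
              rw [List.mem_singleton] at hS
              subst hS
              rw [hq1, hq1']
              simp only [triInf, Finset.mem_insert, Finset.mem_singleton] at hv
              rcases hv with rfl | rfl | rfl <;> simp [inf, intV]
        · -- a has larger denominator: d = a - c
          have hd2 : 0 < a.1.2 - c.1.2 := by omega
          have hcop : Int.gcd (a.1.1 - c.1.1) (a.1.2 - c.1.2) = 1 := by
            rw [← Int.isCoprime_iff_gcd_eq_one]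
            rcases (abs_eq (by norm_num : (0:ℤ) ≤ 1)).mp hnum with h' | h'
            · exact ⟨c.1.2, -c.1.1, by linear_combination h'⟩
            · exact ⟨-c.1.2, c.1.1, by linear_combination -h'⟩
          set d : FareyVertex := ⟨(a.1.1 - c.1.1, a.1.2 - c.1.2), hcop, Or.inl hd2⟩ with hdd
          have had : FareyGraph.Adj a d := by
            rw [adj_iff]
            show |a.1.1 * (a.1.2 - c.1.2) - (a.1.1 - c.1.1) * a.1.2| = 1
            rw [show a.1.1 * (a.1.2 - c.1.2) - (a.1.1 - c.1.1) * a.1.2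
              = -(a.1.1 * c.1.2 - c.1.1 * a.1.2) by ring, abs_neg]
            exact hnum
          have hcd : FareyGraph.Adj c d := by
            rw [adj_iff]
            show |c.1.1 * (a.1.2 - c.1.2) - (a.1.1 - c.1.1) * c.1.2| = 1
            rw [show c.1.1 * (a.1.2 - c.1.2) - (a.1.1 - c.1.1) * c.1.2
              = -(a.1.1 * c.1.2 - c.1.1 * a.1.2) by ring, abs_neg]
            exact hnum
          obtain ⟨T', L', htri', hch', hcT', hdT', hbd', n, hlast'⟩ :=
            ih c d (by show c.1.2.natAbs + (a.1.2 - c.1.2).natAbs ≤ k; omega) hcd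
          have hd2' : d.1.2 = a.1.2 - c.1.2 := rfl
          have hanT' : a ∉ T' := by
            intro hmem
            have hb := hbd' T' List.mem_cons_self a hmem
            rcases le_max_iff.mp hb with h' | h' <;> rw [hd2'] at * <;> omega
          have hnecd : c ≠ d := hcd.ne
          have hint : ({a, c, d} : Finset FareyVertex) ∩ T' = {c, d} := by
            ext v
            simp only [Finset.mem_inter, Finset.mem_insert, Finset.mem_singleton]
            constructor
            · rintro ⟨rfl | rfl | rfl, hv⟩
              · exact absurd hv hanT'
              · exact Or.inl rfl
              · exact Or.inr rfl
            · rintro (rfl | rfl)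
              · exact ⟨Or.inr (Or.inl rfl), hcT'⟩
              · exact ⟨Or.inr (Or.inr rfl), hdT'⟩
          refine ⟨{a, c, d}, T' :: L', ?_, ?_, by simp, by simp, ?_, n, ?_⟩
          · intro S hS
            rcases List.mem_cons.mp hS with rfl | hS
            · exact tri_of_adj a c d h had hcd
            · exact htri' S hS
          · refine List.isChain_cons_cons.mpr ⟨?_, hch'⟩
            rw [linkR, hint, Finset.card_pair hnecd]
          · intro S hS v hv
            rcases List.mem_cons.mp hS with rfl | hS
            · simp only [Finset.mem_insert, Finset.mem_singleton] at hv
              rcases hv with rfl | rfl | rfl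
              · exact le_max_left _ _
              · exact le_max_right _ _
              · rw [hd2']; exact le_max_iff.mpr (Or.inl (by omega))
            · have hb := hbd' S hS v hv
              rw [hd2'] at hb
              rcases le_max_iff.mp hb with h' | h'
              · exact le_max_iff.mpr (Or.inr h')
              · exact le_max_iff.mpr (Or.inl (by omega))
          · rw [List.getLast?_cons_cons]
            exact hlast'

lemma bridgeChain (k : ℕ) : ∀ n : ℤ,
    ∃ L : List (Finset FareyVertex), (∀ S ∈ triInf n :: L, IsFareyTriangle S) ∧
      List.Chain' linkR (triInf n :: L) ∧
      (triInf n :: L).getLast? = some (triInf (n + k)) := by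
  induction k with
  | zero => exact fun n => ⟨[], by simp [triInf_isTriangle], List.isChain_singleton _, by norm_num⟩
  | succ k ih =>
    intro n
    obtain ⟨L, h1, h2, h3⟩ := ih (n + 1)
    refine ⟨triInf (n + 1) :: L, ?_, List.isChain_cons_cons.mpr ⟨triInf_inter n, h2⟩, ?_⟩
    · intro S hS
      rcases List.mem_cons.mp hS with rfl | hS
      · exact triInf_isTriangle n
      · exact h1 S hS
    · rw [List.getLast?_cons_cons, h3]
      congr 2
      push_cast
      ring

lemma linkR_symm {A B : Finset FareyVertex} (h : linkR A B) : linkR B A := by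
  rwa [linkR, Finset.inter_comm]

lemma chain'_rev {L : List (Finset FareyVertex)} (h : List.Chain' linkR L) :
    List.Chain' linkR L.reverse := by
  rw [List.Chain', List.isChain_reverse]
  exact List.IsChain.imp (fun a b hab => linkR_symm hab) h

lemma glue {L1 L2 : List (Finset FareyVertex)} {T : Finset FareyVertex}
    (h1 : List.Chain' linkR L1) (h2 : List.Chain' linkR L2)
    (hl : L1.getLast? = some T) (hh : L2.head? = some T) :
    List.Chain' linkR (L1 ++ L2.tail) ∧ (L1 ++ L2.tail).head? = L1.head? ∧
      (L1 ++ L2.tail).getLast? = L2.getLast? := by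
  have hne1 : L1 ≠ [] := by rintro rfl; simp at hl
  obtain - | ⟨T', t⟩ := L2
  · simp at hh
  · have hT : T' = T := by simpa using hh
    subst hT
    obtain - | ⟨U, t'⟩ := t
    · exact ⟨by simpa using h1, by simp, by simp [hl]⟩
    · refine ⟨List.isChain_append.mpr ⟨h1, List.IsChain.tail h2, ?_⟩, ?_, ?_⟩
      · intro x hx y hy
        rw [hl, Option.mem_some_iff] at hx
        rw [show (List.tail (T' :: U :: t')).head? = some U from rfl,
          Option.mem_some_iff] at hy
        subst hx; subst hy
        exact (List.isChain_cons_cons.mp h2).1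
      · exact List.head?_append_of_ne_nil _ hne1
      · show ((L1 ++ U :: t').getLast? = _)
        rw [List.getLast?_append_of_ne_nil _ (by simp)]
        rfl

lemma vertexChain (x : FareyVertex) :
    ∃ (T : Finset FareyVertex) (L : List (Finset FareyVertex)),
      (∀ S ∈ T :: L, IsFareyTriangle S) ∧ List.Chain' linkR (T :: L) ∧
      x ∈ T ∧ ∃ n : ℤ, (T :: L).getLast? = some (triInf n) := by
  by_cases hxz : x.1.2 = 0
  · have hx1 : x.1.1 = 1 := ((x.2.2.resolve_left (by omega))).2
    have hX : x = inf := Subtype.ext (Prod.ext_iff.mpr ⟨hx1, hxz⟩)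
    refine ⟨triInf 0, [], ?_, List.isChain_singleton _, ?_, 0, rfl⟩
    · intro S hS; rw [List.mem_singleton] at hS; rw [hS]; exact triInf_isTriangle _
    · simp only [triInf, Finset.mem_insert, Finset.mem_singleton]
      exact Or.inl hX
  · have hxp : 0 < x.1.2 := by rcases x.2.2 with h' | ⟨h', _⟩ <;> omega
    obtain ⟨u, v, huv⟩ := Int.isCoprime_iff_gcd_eq_one.mpr x.2.1
    rcases lt_trichotomy u 0 with hu | hu | hu
    · -- b = (v, -u)
      have hcop : Int.gcd v (-u) = 1 := by
        rw [← Int.isCoprime_iff_gcd_eq_one]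
        exact ⟨x.1.2, -x.1.1, by linear_combination huv⟩
      have hadj : FareyGraph.Adj x ⟨(v, -u), hcop, Or.inl (by omega)⟩ := by
        rw [adj_iff]
        show |x.1.1 * (-u) - v * x.1.2| = 1
        rw [show x.1.1 * (-u) - v * x.1.2 = -(u * x.1.1 + v * x.1.2) by ring, huv]
        norm_num
      obtain ⟨T, L, ht, hc, hxT, _, _, n, hlast⟩ :=
        edgeChainAux (x.1.2.natAbs + (-u).natAbs) x _ (le_refl _) hadj
      exact ⟨T, L, ht, hc, hxT, n, hlast⟩
    · -- u = 0 : x is an integer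
      have hq1 : x.1.2 = 1 := by
        have hd : x.1.2 ∣ 1 := ⟨v, by subst hu; linear_combination -huv⟩
        have := Int.le_of_dvd one_pos hd
        omega
      have hX : x = intV x.1.1 := Subtype.ext (Prod.ext_iff.mpr ⟨rfl, hq1⟩)
      refine ⟨triInf x.1.1, [], ?_, List.isChain_singleton _, ?_, x.1.1, rfl⟩
      · intro S hS; rw [List.mem_singleton] at hS; rw [hS]; exact triInf_isTriangle _
      · simp only [triInf, Finset.mem_insert, Finset.mem_singleton]
        exact Or.inr (Or.inl hX)
    · -- b = (-v, u)
      have hcop : Int.gcd (-v) u = 1 := by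
        rw [← Int.isCoprime_iff_gcd_eq_one]
        exact ⟨-x.1.2, x.1.1, by linear_combination huv⟩
      have hadj : FareyGraph.Adj x ⟨(-v, u), hcop, Or.inl hu⟩ := by
        rw [adj_iff]
        show |x.1.1 * u - (-v) * x.1.2| = 1
        rw [show x.1.1 * u - (-v) * x.1.2 = u * x.1.1 + v * x.1.2 by ring, huv]
        norm_num
      obtain ⟨T, L, ht, hc, hxT, _, _, n, hlast⟩ :=
        edgeChainAux (x.1.2.natAbs + u.natAbs) x _ (le_refl _) hadj
      exact ⟨T, L, ht, hc, hxT, n, hlast⟩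

lemma getD_eq (L : List (Finset FareyVertex)) (i : ℕ) (hi : i < L.length) :
    L.getD i ∅ = L[i] := by
  rw [List.getD_eq_getElem?_getD, List.getElem?_eq_getElem hi]
  rfl

end FareyAux

open FareyAux

/-- Any two vertices of the standard Farey graph can be connected by a sequence of
3-cycles in which consecutive 3-cycles share exactly two vertices. -/
theorem farey_connected_by_triangles (x y : FareyVertex) :
    ∃ (n : ℕ) (T : Fin (n + 1) → Finset FareyVertex),
      (∀ i, IsFareyTriangle (T i)) ∧ x ∈ T 0 ∧ y ∈ T (Fin.last n) ∧
        ∀ i : Fin n, (T i.castSucc ∩ T i.succ).card = 2 := by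
  obtain ⟨Tx, Lx, htx, hcx, hxT, nx, hlx⟩ := vertexChain x
  obtain ⟨Ty, Ly, hty, hcy, hyT, ny, hly⟩ := vertexChain y
  have hbridge : ∃ B : List (Finset FareyVertex), (∀ S ∈ B, IsFareyTriangle S) ∧
      List.Chain' linkR B ∧ B.head? = some (triInf nx) ∧
      B.getLast? = some (triInf ny) := by
    rcases le_total nx ny with hle | hle
    · obtain ⟨L, h1, h2, h3⟩ := bridgeChain (ny - nx).toNat nx
      refine ⟨triInf nx :: L, h1, h2, rfl, ?_⟩
      rw [h3]; congr 2; omega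
    · obtain ⟨L, h1, h2, h3⟩ := bridgeChain (nx - ny).toNat ny
      refine ⟨(triInf ny :: L).reverse, ?_, chain'_rev h2, ?_, ?_⟩
      · intro S hS; exact h1 S (List.mem_reverse.mp hS)
      · rw [List.head?_reverse, h3]; congr 2; omega
      · rw [List.getLast?_reverse]; rfl
  obtain ⟨B, htB, hcB, hBh, hBl⟩ := hbridge
  obtain ⟨hc1, hh1, hl1⟩ := glue hcx hcB hlx hBh
  have hcyr : List.Chain' linkR (Ty :: Ly).reverse := chain'_rev hcy
  have hyrh : (Ty :: Ly).reverse.head? = some (triInf ny) := by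
    rw [List.head?_reverse]; exact hly
  obtain ⟨hc2, hh2, hl2⟩ := glue hc1 hcyr (by rw [hl1]; exact hBl) hyrh
  set M : List (Finset FareyVertex) :=
    ((Tx :: Lx) ++ B.tail) ++ (Ty :: Ly).reverse.tail with hM
  have htriM : ∀ S ∈ M, IsFareyTriangle S := by
    intro S hS
    rw [hM] at hS
    rcases List.mem_append.mp hS with hS | hS
    · rcases List.mem_append.mp hS with hS | hS
      · exact htx S hS
      · exact htB S (List.mem_of_mem_tail hS)
    · exact hty S (List.mem_reverse.mp (List.mem_of_mem_tail hS))
  have hheadM : M.head? = some Tx := by rw [hh2, hh1]; rfl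
  have hlastM : M.getLast? = some Ty := by
    rw [hl2, List.getLast?_reverse]; rfl
  have hne : M ≠ [] := by intro h; rw [h] at hheadM; simp at hheadM
  have hlen : 1 ≤ M.length := List.length_pos_iff.mpr hne
  have hhead : M.head hne = Tx := by
    rw [List.head?_eq_head hne] at hheadM
    exact Option.some_injective _ hheadM
  have hlast : M.getLast hne = Ty := by
    rw [List.getLast?_eq_getLast hne] at hlastM
    exact Option.some_injective _ hlastM
  refine ⟨M.length - 1, fun i => M.getD i.1 ∅, ?_, ?_, ?_, ?_⟩
  · intro i
    have hi : i.1 < M.length := by have := i.2; omega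
    show IsFareyTriangle (M.getD i.1 ∅)
    rw [getD_eq M _ hi]
    exact htriM _ (List.getElem_mem hi)
  · show x ∈ M.getD (0 : Fin (M.length - 1 + 1)).1 ∅
    rw [Fin.val_zero, getD_eq M _ (by omega), List.getElem_zero (by omega)]
    show x ∈ M.head hne
    rw [hhead]
    exact hxT
  · show y ∈ M.getD (Fin.last (M.length - 1)).1 ∅
    rw [Fin.val_last, getD_eq M _ (by omega), ← List.getLast_eq_getElem hne, hlast]
    exact hyT
  · intro i
    rw [List.Chain', List.isChain_iff_getElem] at hc2
    have hi : i.1 < M.length - 1 := by have := i.2; omega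
    have h := hc2 i.1 (by omega)
    have e1 : M.getD i.castSucc.1 ∅ = M[i.1]'(by omega) := by
      rw [Fin.coe_castSucc, getD_eq M _ (by omega)]
    have e2 : M.getD i.succ.1 ∅ = M[i.1 + 1]'(by omega) := by
      rw [Fin.val_succ, getD_eq M _ (by omega)]
    show (M.getD i.castSucc.1 ∅ ∩ M.getD i.succ.1 ∅).card = 2
    rw [e1, e2]
    exact h
end
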